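/- arXiv:2602.00764 — 2 statements merged into one kernel-verified Lean document; each statement's English description precedes it below -/
import Mathlib

section
/- For positive integers m and n, the t-shuffle product of y^m and y^n in H_t = Q[t]⟨x,y⟩ satisfies y^m ⧢_t y^n = C(m+n, n) · y^{m+n} − t · Σ_{i = min{m,n}−1}^{m+n−2} [ C(i, i−m+1) + C(i, i−n+1) ] · y^i x y^{m+n−i−1}, where C(·,·) denotes binomial coefficients. -/
open scoped BigOperators

noncomputable section

abbrev Rt : Type := Polynomial ℚ
abbrev Ht : Type := MonoidAlgebra Rt (FreeMonoid (Fin 2))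

/-- The word `l` as an element of `H_t`. -/
def wd (l : List (Fin 2)) : Ht :=
  MonoidAlgebra.of Rt (FreeMonoid (Fin 2)) (FreeMonoid.ofList l)

/-- The letter `x`. -/
def wx : Ht := wd [0]
/-- The letter `y`. -/
def wy : Ht := wd [1]

/-- ρ(x) = 0, ρ(y) = t·x. -/
def ρt : Fin 2 → Ht := fun a => if a = 1 then (Polynomial.X : Rt) • wx else 0

/-- δ: indicator of the empty word. -/
def δw : List (Fin 2) → Rt := fun w => if w = [] then 1 else 0

/-- The t-shuffle product on words. -/
def tshW : List (Fin 2) → List (Fin 2) → Ht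
  | [], w => wd w
  | a :: w, [] => wd (a :: w)
  | a :: w1, b :: w2 =>
      wd [a] * tshW w1 (b :: w2) + wd [b] * tshW (a :: w1) w2
        - δw w1 • (ρt a * wd (b :: w2)) - δw w2 • (ρt b * wd (a :: w1))
  termination_by w1 w2 => w1.length + w2.length

/-- The ordinary shuffle product (t = 0 case) on words. -/
def shW : List (Fin 2) → List (Fin 2) → Ht
  | [], w => wd w
  | a :: w, [] => wd (a :: w)
  | a :: w1, b :: w2 =>
      wd [a] * shW w1 (b :: w2) + wd [b] * shW (a :: w1) w2
  termination_by w1 w2 => w1.length + w2.length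

/-- The t-shuffle product on `H_t`, extended Q[t]-bilinearly. -/
def tshH (u v : Ht) : Ht :=
  u.coeff.sum fun w1 c1 => v.coeff.sum fun w2 c2 =>
    (c1 * c2) • tshW (FreeMonoid.toList w1) (FreeMonoid.toList w2)

/-- The ordinary shuffle product on `H_t`, extended Q[t]-bilinearly. -/
def shH (u v : Ht) : Ht :=
  u.coeff.sum fun w1 c1 => v.coeff.sum fun w2 c2 =>
    (c1 * c2) • shW (FreeMonoid.toList w1) (FreeMonoid.toList w2)


/-- Binomial coefficient `C(n, j)` for an integer `j`, with the convention that it is `0`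
when `j < 0` or `j > n`. -/
def ichoose (n : ℕ) (j : ℤ) : ℕ := if 0 ≤ j ∧ j ≤ (n : ℤ) then n.choose j.toNat else 0

-- auxiliary lemmas
lemma ichoose_eq_zero {n : ℕ} {j : ℤ} (h : j < 0 ∨ (n:ℤ) < j) : ichoose n j = 0 := by
  unfold ichoose; rw [if_neg]; omega

lemma ichoose_zero (j : ℤ) : ichoose 0 j = if j = 0 then 1 else 0 := by
  unfold ichoose
  split_ifs with h1 h2 h2 <;> simp_all <;> omega

lemma ichoose_pascal (n : ℕ) (j : ℤ) :
    ichoose (n+1) j = ichoose n (j-1) + ichoose n j := by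
  unfold ichoose
  rcases lt_or_ge j 0 with h | h
  · rw [if_neg (by omega), if_neg (by omega), if_neg (by omega)]
  rcases eq_or_lt_of_le h with h0 | hpos
  · rw [if_pos (by omega), if_neg (by omega), if_pos (by omega)]
    have : j.toNat = 0 := by omega
    simp [this]
  rcases le_or_gt j n with hn | hn
  · rw [if_pos (by omega), if_pos (by omega), if_pos (by omega)]
    have h1 : j.toNat = (j-1).toNat + 1 := by omega
    rw [h1, Nat.choose_succ_succ']
  rcases eq_or_lt_of_le (by omega : (n:ℤ)+1 ≤ j) with he | hgt
  · rw [if_pos (by omega), if_pos (by omega), if_neg (by omega)]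
    have h1 : j.toNat = n+1 := by omega
    have h2 : (j-1).toNat = n := by omega
    simp [h1, h2]
  · rw [if_neg (by omega), if_neg (by omega), if_neg (by omega)]

lemma wd_mul (l1 l2 : List (Fin 2)) : wd l1 * wd l2 = wd (l1 ++ l2) := by
  simp [wd, ← map_mul]

lemma wy_pow (m : ℕ) : wy ^ m = wd (List.replicate m 1) := by
  induction m with
  | zero => simp [wd]; rfl
  | succ k ih => rw [pow_succ, ih, wy, wd_mul]; congr 1; simp [List.replicate_succ']

lemma tshH_wd (w1 w2 : List (Fin 2)) : tshH (wd w1) (wd w2) = tshW w1 w2 := by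
  simp [tshH, wd, MonoidAlgebra.of_apply]

/-- coefficient as a natural number -/
def coefN (i m n : ℕ) : ℕ := ichoose i ((i:ℤ) - m + 1) + ichoose i ((i:ℤ) - n + 1)

def coefP (i m n : ℕ) : Rt := (coefN i m n : Rt)

def Sγ (m n : ℕ) : Ht :=
  ∑ i ∈ Finset.range (m+n-1), coefP i m n • (wy ^ i * wx * wy ^ (m+n-1-i))

def Fγ (m n : ℕ) : Ht :=
  (((m+n).choose n : ℕ) : Rt) • wy ^ (m+n) - (Polynomial.X : Rt) • Sγ m n

lemma coefN_pascal (i a b : ℕ) :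
    coefN (i+1) (a+1) (b+1) = coefN i a (b+1) + coefN i (a+1) b := by
  unfold coefN
  have h1 : ((i:ℤ)+1) - (a+1) + 1 = ((i:ℤ) - (a+1) + 1) + 1 := by ring
  have h2 : ((i:ℤ)+1) - (b+1) + 1 = ((i:ℤ) - (b+1) + 1) + 1 := by ring
  push_cast
  rw [h1, h2, ichoose_pascal, ichoose_pascal]
  have e1 : (i:ℤ) - (a+1) + 1 + 1 - 1 = (i:ℤ) - (a+1) + 1 := by ring
  have e2 : (i:ℤ) - (b+1) + 1 + 1 - 1 = (i:ℤ) - (b+1) + 1 := by ring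
  rw [e1, e2]
  have e3 : (i:ℤ) - (a+1) + 1 + 1 = (i:ℤ) - a + 1 := by ring
  have e4 : (i:ℤ) - (b+1) + 1 + 1 = (i:ℤ) - b + 1 := by ring
  rw [e3, e4]
  ring

lemma coefN_zero (a b : ℕ) :
    coefN 0 (a+1) (b+1) = (if a = 0 then 1 else 0) + (if b = 0 then 1 else 0) := by
  unfold coefN
  push_cast
  rw [show (0:ℤ) - ((a:ℤ)+1) + 1 = -(a:ℤ) by ring, show (0:ℤ) - ((b:ℤ)+1) + 1 = -(b:ℤ) by ring,
    ichoose_zero, ichoose_zero]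
  congr 1 <;> (split_ifs with h h' <;> simp_all <;> omega)

lemma Sγ_left (a b : ℕ) :
    Sγ a (b+1) = ∑ i ∈ Finset.range (a+b), coefP i a (b+1) • (wy ^ i * wx * wy ^ (a+b-i)) := by
  unfold Sγ
  have h : a + (b+1) - 1 = a + b := by omega
  rw [h]

lemma Sγ_right (a b : ℕ) :
    Sγ (a+1) b = ∑ i ∈ Finset.range (a+b), coefP i (a+1) b • (wy ^ i * wx * wy ^ (a+b-i)) := by
  unfold Sγ
  have h : (a+1) + b - 1 = a + b := by omega
  rw [h]

lemma Sγ_top (a b : ℕ) :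
    Sγ (a+1) (b+1) =
      ∑ i ∈ Finset.range (a+b+1), coefP i (a+1) (b+1) • (wy ^ i * wx * wy ^ (a+b+1-i)) := by
  unfold Sγ
  have h : (a+1) + (b+1) - 1 = a+b+1 := by omega
  rw [h]

lemma Sγ_split (a b : ℕ) :
    Sγ (a+1) (b+1) =
      (wy * Sγ a (b+1) + wy * Sγ (a+1) b) +
        (((if a = 0 then 1 else 0) + (if b = 0 then 1 else 0) : Rt)) • (wx * wy ^ (a+b+1)) := by
  rw [Sγ_top, Finset.sum_range_succ']
  have hf0 : coefP 0 (a+1) (b+1) • (wy ^ 0 * wx * wy ^ (a+b+1-0)) =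
      (((if a = 0 then 1 else 0) + (if b = 0 then 1 else 0) : Rt)) • (wx * wy ^ (a+b+1)) := by
    rw [coefP, coefN_zero]
    push_cast
    rw [pow_zero, one_mul]
  rw [hf0]
  congr 1
  rw [Sγ_left, Sγ_right, Finset.mul_sum, Finset.mul_sum, ← Finset.sum_add_distrib]
  apply Finset.sum_congr rfl
  intro i hi
  have he : a + b + 1 - (i+1) = a + b - i := by omega
  rw [he, coefP, coefN_pascal]
  push_cast
  rw [add_smul]
  have hw : wy ^ (i+1) * wx * wy ^ (a+b-i) = wy * (wy ^ i * wx * wy ^ (a+b-i)) := by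
    rw [pow_succ']; simp [mul_assoc]
  rw [hw, mul_smul_comm, mul_smul_comm, coefP, coefP]

lemma Fγ_step (a b : ℕ) :
    wy * Fγ a (b+1) + wy * Fγ (a+1) b
      - (if a = 0 then (1:Rt) else 0) • ((Polynomial.X : Rt) • wx * wy ^ (b+1))
      - (if b = 0 then (1:Rt) else 0) • ((Polynomial.X : Rt) • wx * wy ^ (a+1))
    = Fγ (a+1) (b+1) := by
  have hda : (if a = 0 then (1:Rt) else 0) • ((Polynomial.X : Rt) • wx * wy ^ (b+1)) =
      (Polynomial.X : Rt) • ((if a = 0 then (1:Rt) else 0) • (wx * wy ^ (a+b+1))) := by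
    by_cases h : a = 0 <;> simp [h, smul_mul_assoc, smul_comm]
  have hdb : (if b = 0 then (1:Rt) else 0) • ((Polynomial.X : Rt) • wx * wy ^ (a+1)) =
      (Polynomial.X : Rt) • ((if b = 0 then (1:Rt) else 0) • (wx * wy ^ (a+b+1))) := by
    by_cases h : b = 0 <;> simp [h, smul_mul_assoc, smul_comm]
  rw [hda, hdb]
  unfold Fγ
  have hc : (((a+1)+(b+1)).choose (b+1) : ℕ) = ((a+(b+1)).choose (b+1) + ((a+1)+b).choose b : ℕ) := by
    have h1 : (a+1)+(b+1) = (a+b+1)+1 := by omega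
    have h2 : a+(b+1) = a+b+1 := by omega
    have h3 : (a+1)+b = a+b+1 := by omega
    rw [h1, h2, h3, Nat.choose_succ_succ']
    exact Nat.add_comm _ _
  have hpow : wy * wy ^ (a+(b+1)) = wy ^ ((a+1)+(b+1)) := by
    rw [← pow_succ', (by omega : a+(b+1)+1 = (a+1)+(b+1))]
  have hpow2 : wy * wy ^ ((a+1)+b) = wy ^ ((a+1)+(b+1)) := by
    rw [← pow_succ', (by omega : (a+1)+b+1 = (a+1)+(b+1))]
  rw [Sγ_split, hc]
  push_cast
  rw [mul_sub, mul_sub, mul_smul_comm, mul_smul_comm, mul_smul_comm, mul_smul_comm,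
    hpow, hpow2]
  generalize wy ^ ((a+1)+(b+1)) = U
  generalize wy * Sγ a (b+1) = s1
  generalize wy * Sγ (a+1) b = s2
  generalize wx * wy ^ (a+b+1) = G
  generalize (if a = 0 then (1:Rt) else 0) = ia
  generalize (if b = 0 then (1:Rt) else 0) = ib
  module

lemma Sγ_zero_left (n : ℕ) : Sγ 0 n = 0 := by
  unfold Sγ
  apply Finset.sum_eq_zero
  intro i hi
  simp only [Finset.mem_range] at hi
  have h : coefN i 0 n = 0 := by
    unfold coefN
    rw [ichoose_eq_zero (Or.inr (by omega)), ichoose_eq_zero (Or.inl (by omega))]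
  rw [coefP, h]
  simp

lemma Sγ_zero_right (m : ℕ) : Sγ m 0 = 0 := by
  unfold Sγ
  apply Finset.sum_eq_zero
  intro i hi
  simp only [Finset.mem_range] at hi
  have h : coefN i m 0 = 0 := by
    unfold coefN
    rw [ichoose_eq_zero (Or.inl (by omega)), ichoose_eq_zero (Or.inr (by omega))]
  rw [coefP, h]
  simp

lemma Fγ_zero_left (n : ℕ) : Fγ 0 n = wd (List.replicate n 1) := by
  unfold Fγ
  rw [Sγ_zero_left, smul_zero, sub_zero, Nat.zero_add, Nat.choose_self, ← wy_pow]
  simp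

lemma Fγ_zero_right (m : ℕ) : Fγ m 0 = wd (List.replicate m 1) := by
  unfold Fγ
  rw [Sγ_zero_right, smul_zero, sub_zero, Nat.add_zero, Nat.choose_zero_right, ← wy_pow]
  simp

lemma δw_rep (a : ℕ) : δw (List.replicate a 1) = if a = 0 then (1:Rt) else 0 := by
  unfold δw
  congr 1
  simp [List.replicate_eq_nil_iff]

lemma key_aux : ∀ N m n : ℕ, m + n ≤ N →
    tshW (List.replicate m 1) (List.replicate n 1) = Fγ m n := by
  intro N
  induction N with
  | zero =>
    intro m n h
    have hm : m = 0 := by omega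
    have hn : n = 0 := by omega
    subst hm; subst hn
    rw [Fγ_zero_left]
    show tshW [] [] = wd []
    rw [tshW.eq_1]
  | succ k ih =>
    intro m n h
    match m, n with
    | 0, n =>
      rw [Fγ_zero_left]
      show tshW [] (List.replicate n 1) = wd (List.replicate n 1)
      rw [tshW.eq_1]
    | (a+1), 0 =>
      rw [Fγ_zero_right]
      show tshW (1 :: List.replicate a 1) [] = wd (List.replicate (a+1) 1)
      rw [tshW, ← List.replicate_succ]
    | (a+1), (b+1) =>
      rw [List.replicate_succ, List.replicate_succ (n := b)]
      rw [tshW]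
      rw [← List.replicate_succ, ← List.replicate_succ]
      rw [ih a (b+1) (by omega), ih (a+1) b (by omega)]
      rw [δw_rep, δw_rep, ← wy_pow, ← wy_pow]
      show wy * Fγ a (b+1) + wy * Fγ (a+1) b
        - (if a = 0 then (1:Rt) else 0) • ((Polynomial.X : Rt) • wx * wy ^ (b+1))
        - (if b = 0 then (1:Rt) else 0) • ((Polynomial.X : Rt) • wx * wy ^ (a+1))
        = Fγ (a+1) (b+1)
      exact Fγ_step a b


set_option maxHeartbeats 1000000 in
/-- Lemma: for positive integers m, n,
`y^m ⧢_t y^n = C(m+n,n)·y^{m+n} − t·Σ_{i=min{m,n}−1}^{m+n−2} (C(i,i−m+1)+C(i,i−n+1)) y^i x y^{m+n−i−1}`. -/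
theorem tshuffle_ym_yn (m n : ℕ) (hm : 1 ≤ m) (hn : 1 ≤ n) :
    tshH (wy ^ m) (wy ^ n) =
      (((m + n).choose n : Rt)) • wy ^ (m + n) -
        (Polynomial.X : Rt) •
          ∑ i ∈ Finset.Icc (min m n - 1) (m + n - 2),
            ((ichoose i ((i : ℤ) - m + 1) + ichoose i ((i : ℤ) - n + 1) : ℕ) : Rt) •
              (wy ^ i * wx * wy ^ (m + n - i - 1)) := by
  rw [wy_pow m, wy_pow n, tshH_wd, key_aux (m+n) m n le_rfl]
  unfold Fγ Sγ
  have hr : Finset.range (m+n-1) = Finset.Icc 0 (m+n-2) := by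
    rw [Finset.range_eq_Ico, (by omega : m+n-1 = m+n-2+1), Finset.Ico_add_one_right_eq_Icc]
  have hsub : Finset.Icc (min m n - 1) (m+n-2) ⊆ Finset.Icc 0 (m+n-2) :=
    Finset.Icc_subset_Icc (Nat.zero_le _) le_rfl
  have hz : ∀ i ∈ Finset.Icc 0 (m+n-2), i ∉ Finset.Icc (min m n - 1) (m+n-2) →
      coefP i m n • (wy ^ i * wx * wy ^ (m+n-1-i)) = 0 := by
    intro i hit his
    simp only [Finset.mem_Icc, not_and_or, not_le] at hit his
    have hilt : i < min m n - 1 := by omega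
    have hmn : i + 1 < m ∧ i + 1 < n := by
      constructor <;> [have := Nat.min_le_left m n; have := Nat.min_le_right m n] <;> omega
    have h : coefN i m n = 0 := by
      unfold coefN
      rw [ichoose_eq_zero (Or.inl (by omega)), ichoose_eq_zero (Or.inl (by omega))]
    rw [coefP, h]
    simp
  rw [hr, ← Finset.sum_subset hsub hz]
  congr 1
  congr 1
  apply Finset.sum_congr rfl
  intro i hi
  rw [coefP, coefN, (by omega : m+n-1-i = m+n-i-1)]
end
end

section
/- Let a = a₁a₂⋯a_m and b = b₁b₂⋯b_n be words in the letters {x,y}, and fix k with 1 ≤ k ≤ m. Then in H_t = Q[t]⟨x,y⟩, a ⧢_t b = Σ_{i=0}^{n} (a₁⋯a_{k−1} ⧢ b₁⋯b_i) a_k (a_{k+1}⋯a_m ⧢_t b_{i+1}⋯b_n) − (a₁⋯a_{k−1} ⧢ b₁⋯b_{n−1}ρ(b_n)) a_k a_{k+1}⋯a_m − δ_{k,m} Σ_{i=0}^{n−1} (a₁⋯a_{m−1} ⧢ b₁⋯b_i) ρ(a_m) b_{i+1}⋯b_n, where ⧢ denotes the ordinary shuffle product (the t = 0 case of ⧢_t).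 -/
open scoped BigOperators

noncomputable section

-- helper lemmas
lemma wd_append (u v : List (Fin 2)) : wd (u ++ v) = wd u * wd v := by
  simp [wd, ← map_mul]

lemma wd_nil : wd ([] : List (Fin 2)) = 1 := by
  simp [wd]; rfl

lemma wd_single (l : List (Fin 2)) : wd l = MonoidAlgebra.single (FreeMonoid.ofList l) (1 : Rt) := by
  rfl

lemma tshH_wd_wd (a b : List (Fin 2)) : tshH (wd a) (wd b) = tshW a b := by
  simp [tshH, wd_single, MonoidAlgebra.coeff_single, Finsupp.sum_single_index]

lemma shH_wd_wd (a b : List (Fin 2)) : shH (wd a) (wd b) = shW a b := by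
  simp [shH, wd_single, MonoidAlgebra.coeff_single, Finsupp.sum_single_index]

def ρc : Fin 2 → Rt := fun c => if c = 1 then Polynomial.X else 0

lemma ρt_mul_wd (c : Fin 2) (v : List (Fin 2)) : ρt c * wd v = ρc c • wd (0 :: v) := by
  rcases (by omega : c = 0 ∨ c = 1) with h | h <;>
    simp [ρt, ρc, h, wx, smul_mul_assoc, ← wd_append]

lemma wd_mul_ρt (v : List (Fin 2)) (c : Fin 2) : wd v * ρt c = ρc c • wd (v ++ [0]) := by
  rcases (by omega : c = 0 ∨ c = 1) with h | h <;>
    simp [ρt, ρc, h, wx, mul_smul_comm, ← wd_append]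

lemma shH_wd_single (u v : List (Fin 2)) (r : Rt) :
    shH (wd u) (MonoidAlgebra.single (FreeMonoid.ofList v) r) = r • shW u v := by
  simp [shH, wd_single, MonoidAlgebra.coeff_single, Finsupp.sum_single_index]

lemma shH_wd_smul_wd (u : List (Fin 2)) (r : Rt) (v : List (Fin 2)) :
    shH (wd u) (r • wd v) = r • shW u v := by
  rw [wd_single v, MonoidAlgebra.smul_single, smul_eq_mul, mul_one, shH_wd_single]

lemma shH_wd_ρt (u v : List (Fin 2)) (c : Fin 2) :
    shH (wd u) (wd v * ρt c) = ρc c • shW u (v ++ [0]) := by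
  rw [wd_mul_ρt, shH_wd_smul_wd]

-- equation lemmas check
example (a b : Fin 2) (w1 w2 : List (Fin 2)) :
    tshW (a :: w1) (b :: w2) = wd [a] * tshW w1 (b :: w2) + wd [b] * tshW (a :: w1) w2
        - δw w1 • (ρt a * wd (b :: w2)) - δw w2 • (ρt b * wd (a :: w1)) := by
  rw [tshW]

lemma tshW_nil_right (u : List (Fin 2)) : tshW u [] = wd u := by
  cases u <;> rw [tshW]

lemma shW_nil_right (u : List (Fin 2)) : shW u [] = wd u := by
  cases u <;> rw [shW]

lemma shW_nil_left (u : List (Fin 2)) : shW [] u = wd u := by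
  rw [shW]

lemma wd_cons (c : Fin 2) (l : List (Fin 2)) : wd (c :: l) = wd [c] * wd l := by
  rw [← wd_append]; rfl

lemma take_get_drop_list (a : List (Fin 2)) (k : ℕ) (h1 : 1 ≤ k) (h2 : k ≤ a.length) :
    a.take (k-1) ++ a.getD (k-1) 0 :: a.drop k = a := by
  conv_rhs => rw [← List.take_append_drop (k-1) a]
  congr 1
  rw [List.drop_eq_getElem_cons (by omega : k - 1 < a.length),
    List.getD_eq_getElem _ _ (by omega)]
  congr 2
  omega

lemma take_get_drop (a : List (Fin 2)) (k : ℕ) (h1 : 1 ≤ k) (h2 : k ≤ a.length) :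
    wd (a.take (k-1)) * wd [a.getD (k-1) 0] * wd (a.drop k) = wd a := by
  rw [mul_assoc, ← wd_cons, ← wd_append, take_get_drop_list a k h1 h2]

lemma getLast_eq_getLastD (l : List (Fin 2)) (h : l ≠ []) : l.getLast h = l.getLastD 0 := by
  simp [List.getLastD_eq_getLast?, List.getLast?_eq_getLast h]

lemma ρt_eq (c : Fin 2) : ρt c = ρc c • wd [0] := by
  rcases (by omega : c = 0 ∨ c = 1) with h | h <;> simp [ρt, ρc, h, wx]

lemma mul_ρt_mul (X : Ht) (c : Fin 2) (w : List (Fin 2)) :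
    X * ρt c * wd w = ρc c • (X * wd (0 :: w)) := by
  rw [ρt_eq, mul_smul_comm, smul_mul_assoc, mul_assoc, ← wd_cons]

def RW (a b : List (Fin 2)) (k : ℕ) : Ht :=
  (∑ i ∈ Finset.range (b.length + 1),
      shW (a.take (k - 1)) (b.take i) * wd [a.getD (k - 1) 0] * tshW (a.drop k) (b.drop i)) -
  ρc (b.getLastD 0) • (shW (a.take (k - 1)) (b.dropLast ++ [0]) * wd (a.drop (k - 1))) -
  (if k = a.length then (1 : Rt) else 0) •
    ∑ i ∈ Finset.range b.length,
      ρc (a.getLastD 0) • (shW a.dropLast (b.take i) * wd (0 :: b.drop i))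


lemma shW_cons_cons (a b : Fin 2) (w1 w2 : List (Fin 2)) :
    shW (a :: w1) (b :: w2) = wd [a] * shW w1 (b :: w2) + wd [b] * shW (a :: w1) w2 := by
  rw [shW]

lemma tshW_cons_cons (a b : Fin 2) (w1 w2 : List (Fin 2)) :
    tshW (a :: w1) (b :: w2) = wd [a] * tshW w1 (b :: w2) + wd [b] * tshW (a :: w1) w2
        - δw w1 • (ρt a * wd (b :: w2)) - δw w2 • (ρt b * wd (a :: w1)) := by
  rw [tshW]

lemma wd_mul_wd (u v : List (Fin 2)) : wd u * wd v = wd (u ++ v) := (wd_append u v).symm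

lemma wd_mul_wd_mul (u v : List (Fin 2)) (X : Ht) : wd u * (wd v * X) = wd (u ++ v) * X := by
  rw [← mul_assoc, wd_mul_wd]

lemma delta_shift (p q : ℕ) : (if p + 1 = q + 1 then (1:Rt) else 0) = if p = q then 1 else 0 := by
  simp

lemma delta_one (q : ℕ) : (if 1 = q + 1 + 1 then (1:Rt) else 0) = 0 := if_neg (by omega)

lemma split_cons (c : Fin 2) (l : List (Fin 2)) (k : ℕ) (h : k ≤ l.length) :
    List.take k (c :: l) ++ (c :: l)[k]?.getD 0 :: List.drop k l = c :: l := by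
  have := take_get_drop_list (c :: l) (k + 1) (by omega) (by simp; omega)
  simpa [List.getD_eq_getElem?_getD] using this

set_option maxHeartbeats 3000000 in
theorem keyW_aux : ∀ (N : ℕ) (a b : List (Fin 2)) (k : ℕ), a.length + b.length ≤ N →
    1 ≤ k → k ≤ a.length → b ≠ [] → tshW a b = RW a b k := by
  intro N
  induction N with
  | zero =>
    intro a b k hN hk1 hk2 hb
    exfalso
    rcases b with _ | ⟨c, t⟩
    · exact hb rfl
    · simp only [List.length_cons] at hN; omega
  | succ N ih =>
    intro a b k hN hk1 hk2 hb
    rcases a with _ | ⟨a₀, w1⟩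
    · simp only [List.length_nil] at hk2; omega
    rcases b with _ | ⟨b₀, b'⟩
    · exact absurd rfl hb
    simp only [List.length_cons] at hN hk2
    rcases Nat.lt_or_ge k 2 with hk | hk
    · -- k = 1
      have hk1' : k = 1 := by omega
      subst hk1'
      rcases b' with _ | ⟨b₁, b''⟩
      · -- A1 : b = [b₀]
        rw [tshW]
        by_cases hw : w1 = []
        · subst hw
          simp [RW, δw, shW_cons_cons, shW_nil_left, shW_nil_right, tshW_nil_right, wd_nil, wd_mul_wd, wd_mul_wd_mul, ρt_mul_wd, delta_shift, delta_one, List.getLastD_cons, List.dropLast_cons₂, List.dropLast_singleton, mul_assoc, mul_smul_comm, smul_mul_assoc, smul_smul, smul_sub, mul_sub, sub_mul, smul_add, mul_add, add_mul, Finset.sum_range_succ', Finset.sum_range_zero, Finset.sum_range_one, Finset.mul_sum, Finset.smul_sum, Finset.sum_add_distrib, List.take_succ_cons, List.drop_succ_cons, List.take_zero, List.drop_zero, List.take_nil, List.drop_nil, List.length_cons, List.cons_append, List.nil_append, List.singleton_append, List.append_assoc, List.getD_cons_zero, List.getD_cons_succ, List.drop_one, List.tail_cons, List.length_nil]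
          try module
        · rcases w1 with _ | ⟨a₁, w1'⟩
          · exact absurd rfl hw
          simp [RW, δw, shW_cons_cons, shW_nil_left, shW_nil_right, tshW_nil_right, wd_nil, wd_mul_wd, wd_mul_wd_mul, ρt_mul_wd, delta_shift, delta_one, List.getLastD_cons, List.dropLast_cons₂, List.dropLast_singleton, mul_assoc, mul_smul_comm, smul_mul_assoc, smul_smul, smul_sub, mul_sub, sub_mul, smul_add, mul_add, add_mul, Finset.sum_range_succ', Finset.sum_range_zero, Finset.sum_range_one, Finset.mul_sum, Finset.smul_sum, Finset.sum_add_distrib, List.take_succ_cons, List.drop_succ_cons, List.take_zero, List.drop_zero, List.take_nil, List.drop_nil, List.length_cons, List.cons_append, List.nil_append, List.singleton_append, List.append_assoc, List.getD_cons_zero, List.getD_cons_succ, List.drop_one, List.tail_cons, List.length_nil]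
          try module
      · -- A2 : b = b₀ :: b₁ :: b''
        have ih2 := ih (a₀ :: w1) (b₁ :: b'') 1 (by simp only [List.length_cons] at hN ⊢; omega) (by omega)
          (by simp) (by simp)
        rw [tshW, ih2]
        by_cases hw : w1 = []
        · subst hw
          simp [RW, δw, shW_cons_cons, shW_nil_left, shW_nil_right, tshW_nil_right, wd_nil, wd_mul_wd, wd_mul_wd_mul, ρt_mul_wd, delta_shift, delta_one, List.getLastD_cons, List.dropLast_cons₂, List.dropLast_singleton, mul_assoc, mul_smul_comm, smul_mul_assoc, smul_smul, smul_sub, mul_sub, sub_mul, smul_add, mul_add, add_mul, Finset.sum_range_succ', Finset.sum_range_zero, Finset.sum_range_one, Finset.mul_sum, Finset.smul_sum, Finset.sum_add_distrib, List.take_succ_cons, List.drop_succ_cons, List.take_zero, List.drop_zero, List.take_nil, List.drop_nil, List.length_cons, List.cons_append, List.nil_append, List.singleton_append, List.append_assoc, List.getD_cons_zero, List.getD_cons_succ, List.drop_one, List.tail_cons, List.length_nil]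
          try module
        · rcases w1 with _ | ⟨a₁, w1'⟩
          · exact absurd rfl hw
          simp [RW, δw, shW_cons_cons, shW_nil_left, shW_nil_right, tshW_nil_right, wd_nil, wd_mul_wd, wd_mul_wd_mul, ρt_mul_wd, delta_shift, delta_one, List.getLastD_cons, List.dropLast_cons₂, List.dropLast_singleton, mul_assoc, mul_smul_comm, smul_mul_assoc, smul_smul, smul_sub, mul_sub, sub_mul, smul_add, mul_add, add_mul, Finset.sum_range_succ', Finset.sum_range_zero, Finset.sum_range_one, Finset.mul_sum, Finset.smul_sum, Finset.sum_add_distrib, List.take_succ_cons, List.drop_succ_cons, List.take_zero, List.drop_zero, List.take_nil, List.drop_nil, List.length_cons, List.cons_append, List.nil_append, List.singleton_append, List.append_assoc, List.getD_cons_zero, List.getD_cons_succ, List.drop_one, List.tail_cons, List.length_nil]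
          try module
    · -- k ≥ 2
      obtain ⟨k'', rfl⟩ : ∃ k'', k = k'' + 1 + 1 := ⟨k - 2, by omega⟩
      rcases w1 with _ | ⟨a₁, w1'⟩
      · simp only [List.length_nil] at hk2; omega
      have ih1 := ih (a₁ :: w1') (b₀ :: b') (k'' + 1) (by simp only [List.length_cons] at hN ⊢; omega) (by omega)
        (by simp at hk2 ⊢; omega) (by simp)
      have hs := split_cons a₁ w1' k'' (by simp at hk2 ⊢; omega)
      rcases b' with _ | ⟨b₁, b''⟩
      · -- B1 : b = [b₀]
        rw [tshW, ih1]
        simp [RW, δw, hs, shW_cons_cons, shW_nil_left, shW_nil_right, tshW_nil_right, wd_nil, wd_mul_wd, wd_mul_wd_mul, ρt_mul_wd, delta_shift, delta_one, List.getLastD_cons, List.dropLast_cons₂, List.dropLast_singleton, mul_assoc, mul_smul_comm, smul_mul_assoc, smul_smul, smul_sub, mul_sub, sub_mul, smul_add, mul_add, add_mul, Finset.sum_range_succ', Finset.sum_range_zero, Finset.sum_range_one, Finset.mul_sum, Finset.smul_sum, Finset.sum_add_distrib, List.take_succ_cons, List.drop_succ_cons, List.take_zero, List.drop_zero, List.take_nil,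 List.drop_nil, List.length_cons, List.cons_append, List.nil_append, List.singleton_append, List.append_assoc, List.getD_cons_zero, List.getD_cons_succ, List.drop_one, List.tail_cons, List.length_nil]
        try module
      · -- B2
        have ih2 := ih (a₀ :: a₁ :: w1') (b₁ :: b'') (k'' + 1 + 1)
          (by simp only [List.length_cons] at hN ⊢; omega) (by omega) (by simp at hk2 ⊢; omega) (by simp)
        rw [tshW, ih1, ih2]
        simp [RW, δw, hs, shW_cons_cons, shW_nil_left, shW_nil_right, tshW_nil_right, wd_nil, wd_mul_wd, wd_mul_wd_mul, ρt_mul_wd, delta_shift, delta_one, List.getLastD_cons, List.dropLast_cons₂, List.dropLast_singleton, mul_assoc, mul_smul_comm, smul_mul_assoc, smul_smul, smul_sub, mul_sub, sub_mul, smul_add, mul_add, add_mul, Finset.sum_range_succ', Finset.sum_range_zero, Finset.sum_range_one, Finset.mul_sum, Finset.smul_sum, Finset.sum_add_distrib, List.take_succ_cons, List.drop_succ_cons, List.take_zero, List.drop_zero, List.take_nil, List.drop_nil, List.length_cons, List.cons_append, List.nil_append, List.singleton_append, List.append_assoc, List.getD_cons_zero, List.getD_cons_succ, List.drop_one, List.tail_cons,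 List.length_nil]
        try module

theorem keyW (a b : List (Fin 2)) (k : ℕ) (h1 : 1 ≤ k) (h2 : k ≤ a.length) (hb : b ≠ []) :
    tshW a b = RW a b k := keyW_aux (a.length + b.length) a b k le_rfl h1 h2 hb


/-- Recursive formula for the t-shuffle product: for words `a = a₁⋯a_m`, `b = b₁⋯b_n`
and a fixed `k` with `1 ≤ k ≤ m`,
`a ⧢_t b = Σ_{i=0}^{n} (a₁⋯a_{k−1} ⧢ b₁⋯b_i) a_k (a_{k+1}⋯a_m ⧢_t b_{i+1}⋯b_n)
  − (a₁⋯a_{k−1} ⧢ b₁⋯b_{n−1}ρ(b_n)) a_k⋯a_m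
  − δ_{k,m} Σ_{i=0}^{n−1} (a₁⋯a_{m−1} ⧢ b₁⋯b_i) ρ(a_m) b_{i+1}⋯b_n`. -/
theorem tshuffle_recursive (a b : List (Fin 2)) (k : ℕ) (h1 : 1 ≤ k) (h2 : k ≤ a.length)
    (hb : b ≠ []) :
    tshH (wd a) (wd b) =
      (∑ i ∈ Finset.range (b.length + 1),
        shH (wd (a.take (k - 1))) (wd (b.take i)) * wd [a.get ⟨k - 1, by omega⟩] *
          tshH (wd (a.drop k)) (wd (b.drop i))) -
      shH (wd (a.take (k - 1))) (wd b.dropLast * ρt (b.getLast hb)) * wd (a.drop (k - 1)) -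
      (if k = a.length then (1 : Rt) else 0) •
        ∑ i ∈ Finset.range b.length,
          shH (wd a.dropLast) (wd (b.take i)) *
            ρt (a.getLast (List.ne_nil_of_length_pos (by omega))) * wd (b.drop i) := by
  have hget : a.get ⟨k - 1, by omega⟩ = a.getD (k - 1) 0 := by
    rw [List.get_eq_getElem, List.getD_eq_getElem _ _ (by omega)]
  rw [tshH_wd_wd, keyW a b k h1 h2 hb, RW]
  refine congrArg₂ (· - ·) (congrArg₂ (· - ·) ?_ ?_) ?_
  · exact Finset.sum_congr rfl fun i _ => by rw [shH_wd_wd, tshH_wd_wd, hget]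
  · rw [shH_wd_ρt, getLast_eq_getLastD, smul_mul_assoc]
  · congr 1
    exact Finset.sum_congr rfl fun i _ => by
      rw [shH_wd_wd, mul_ρt_mul, getLast_eq_getLastD]
end
end
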